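/- Let D < -4 with D ≡ 0 or 1 mod 4, let Q_1,…,Q_h be the reduced forms of discriminant D, and let γ_1,…,γ_m be a complete set of representatives of the left cosets of ±Γ_1(N) in SL_2(ℤ). Then the forms Q_i^{γ_k} (for those pairs (i,k) with gcd of the leading coefficient of Q_i^{γ_k} and N equal to 1) represent pairwise distinct classes in 𝒬(D,N)/Γ_1(N), and every class in 𝒬(D,N)/Γ_1(N) is represented by some such Q_i^{γ_k}. -/

import Mathlib

open CongruenceSubgroup

/-- The coefficients `(a', b', c')` of the form `Q^γ(v) = Q(γv)` obtained from the form
`F = (a, b, c)` (i.e. `a x² + b x y + c y²`) by the matrix `γ`. -/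
def formAct (γ : Matrix.SpecialLinearGroup (Fin 2) ℤ) (F : ℤ × ℤ × ℤ) : ℤ × ℤ × ℤ :=
  (F.1 * (γ 0 0) ^ 2 + F.2.1 * (γ 0 0) * (γ 1 0) + F.2.2 * (γ 1 0) ^ 2,
   2 * F.1 * (γ 0 0) * (γ 0 1) + F.2.1 * ((γ 0 0) * (γ 1 1) + (γ 0 1) * (γ 1 0))
     + 2 * F.2.2 * (γ 1 0) * (γ 1 1),
   F.1 * (γ 0 1) ^ 2 + F.2.1 * (γ 0 1) * (γ 1 1) + F.2.2 * (γ 1 1) ^ 2)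

/-- `F = (a,b,c)` is a primitive positive definite form of discriminant `D`. -/
def IsForm (D : ℤ) (F : ℤ × ℤ × ℤ) : Prop :=
  Int.gcd (Int.gcd F.1 F.2.1) F.2.2 = 1 ∧ 0 < F.1 ∧ F.2.1 ^ 2 - 4 * F.1 * F.2.2 = D

/-- `F = (a,b,c)` is reduced: `|b| ≤ a ≤ c`, with `b ≥ 0` if `|b| = a` or `a = c`. -/
def IsReducedForm (F : ℤ × ℤ × ℤ) : Prop :=
  |F.2.1| ≤ F.1 ∧ F.1 ≤ F.2.2 ∧ ((|F.2.1| = F.1 ∨ F.1 = F.2.2) → 0 ≤ F.2.1)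

/-! ### Auxiliary lemmas -/

lemma sl_det (g : Matrix.SpecialLinearGroup (Fin 2) ℤ) :
    g 0 0 * g 1 1 - g 0 1 * g 1 0 = 1 := by
  have := g.2
  rw [Matrix.det_fin_two] at this
  exact this

lemma one_le_sq {x : ℤ} (hx : x ≠ 0) : 1 ≤ x ^ 2 := by
  rcases hx.lt_or_gt with h | h <;> nlinarith

lemma formAct_one (F : ℤ × ℤ × ℤ) : formAct 1 F = F := by simp [formAct]

lemma formAct_mul (g d : Matrix.SpecialLinearGroup (Fin 2) ℤ) (F : ℤ × ℤ × ℤ) :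
    formAct d (formAct g F) = formAct (g * d) F := by
  simp only [formAct, Matrix.SpecialLinearGroup.coe_mul]
  refine Prod.ext ?_ (Prod.ext ?_ ?_) <;>
  · simp [Matrix.mul_apply, Fin.sum_univ_succ]
    ring

lemma formAct_neg (g : Matrix.SpecialLinearGroup (Fin 2) ℤ) (F : ℤ × ℤ × ℤ) :
    formAct (-g) F = formAct g F := by
  simp only [formAct]
  have h : ∀ i j, ((-g : Matrix.SpecialLinearGroup (Fin 2) ℤ) i j) = -(g i j) := by
    intro i j
    simp [Matrix.SpecialLinearGroup.coe_neg]
  simp only [h]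
  refine Prod.ext ?_ (Prod.ext ?_ ?_) <;> ring

lemma isForm_formAct {D : ℤ} (hD : D < 0) (g : Matrix.SpecialLinearGroup (Fin 2) ℤ)
    {F : ℤ × ℤ × ℤ} (hF : IsForm D F) : IsForm D (formAct g F) := by
  obtain ⟨a, b, c⟩ := F
  have hprim : Int.gcd (Int.gcd a b) c = 1 := hF.1
  have hpos : 0 < a := hF.2.1
  have hdisc : b ^ 2 - 4 * a * c = D := hF.2.2
  have hdet := sl_det g
  set α := g 0 0 with hα'; set β := g 0 1; set γ := g 1 0; set d := g 1 1
  refine ⟨?_, ?_, ?_⟩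
  · -- primitivity
    have hinv : formAct g⁻¹ (formAct g (a, b, c)) = (a, b, c) := by
      rw [formAct_mul, mul_inv_cancel, formAct_one]
    set G := formAct g (a, b, c) with hG
    set e : ℕ := Int.gcd (Int.gcd G.1 G.2.1) G.2.2 with he
    have t1 : (e : ℤ) ∣ ((Int.gcd G.1 G.2.1 : ℤ)) := Int.gcd_dvd_left _ _
    have hd1 : (e : ℤ) ∣ G.1 := t1.trans (Int.gcd_dvd_left _ _)
    have hd2 : (e : ℤ) ∣ G.2.1 := t1.trans (Int.gcd_dvd_right _ _)
    have hd3 : (e : ℤ) ∣ G.2.2 := Int.gcd_dvd_right _ _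
    have hea : (e : ℤ) ∣ a := by
      have h1 := congrArg Prod.fst hinv
      simp only [formAct] at h1
      rw [← h1]
      exact dvd_add (dvd_add (hd1.mul_right _) (Dvd.dvd.mul_right (hd2.mul_right _) _))
        (hd3.mul_right _)
    have heb : (e : ℤ) ∣ b := by
      have h1 := congrArg (fun p : ℤ × ℤ × ℤ => p.2.1) hinv
      simp only [formAct] at h1
      rw [← h1]
      exact dvd_add (dvd_add (Dvd.dvd.mul_right (Dvd.dvd.mul_right (hd1.mul_left 2) _) _)
        (hd2.mul_right _)) (Dvd.dvd.mul_right (Dvd.dvd.mul_right (hd3.mul_left 2) _) _)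
    have hec : (e : ℤ) ∣ c := by
      have h1 := congrArg (fun p : ℤ × ℤ × ℤ => p.2.2) hinv
      simp only [formAct] at h1
      rw [← h1]
      exact dvd_add (dvd_add (hd1.mul_right _) (Dvd.dvd.mul_right (hd2.mul_right _) _))
        (hd3.mul_right _)
    have hdvd1 : (e : ℤ) ∣ (1 : ℤ) := by
      have h2 : (e : ℤ) ∣ (Int.gcd (Int.gcd a b) c : ℤ) :=
        Int.dvd_coe_gcd (Int.dvd_coe_gcd hea heb) hec
      rwa [hprim] at h2
    exact_mod_cast Int.eq_one_of_dvd_one (by positivity) hdvd1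
  · -- positivity
    show 0 < a * α ^ 2 + b * α * γ + c * γ ^ 2
    have hc : 0 < c := by nlinarith [sq_nonneg b]
    rcases eq_or_ne γ 0 with hγ | hγ
    · have hα : α ≠ 0 := by rintro h0; rw [h0, hγ] at hdet; simp at hdet
      rw [hγ]
      have := one_le_sq hα
      nlinarith
    · have h1 : 0 < 4 * a * (a * α ^ 2 + b * α * γ + c * γ ^ 2) := by
        have key : 4 * a * (a * α ^ 2 + b * α * γ + c * γ ^ 2)
            = (2 * a * α + b * γ) ^ 2 - D * γ ^ 2 := by linear_combination (-γ ^ 2) * hdisc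
        have hγ2 : 1 ≤ γ ^ 2 := one_le_sq hγ
        nlinarith [sq_nonneg (2 * a * α + b * γ)]
      nlinarith
  · -- discriminant
    show (2 * a * α * β + b * (α * d + β * γ) + 2 * c * γ * d) ^ 2
        - 4 * (a * α ^ 2 + b * α * γ + c * γ ^ 2) * (a * β ^ 2 + b * β * d + c * d ^ 2) = D
    linear_combination (α * d - β * γ + 1) * (b ^ 2 - 4 * a * c) * hdet + hdisc

/-! ### Minimum-value lemmas for reduced forms -/

lemma min_val {a b c x y : ℤ} (ha : 0 < a) (hb : |b| ≤ a) (hac : a ≤ c)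
    (hxy : ¬(x = 0 ∧ y = 0)) : a ≤ a * x ^ 2 + b * x * y + c * y ^ 2 := by
  have hb1 : -a ≤ b := neg_le_of_abs_le hb
  have hb2 : b ≤ a := le_of_abs_le hb
  rcases eq_or_ne y 0 with hy | hy
  · have hx : x ≠ 0 := fun h => hxy ⟨h, hy⟩
    have h1 : 1 ≤ x ^ 2 := by rcases hx.lt_or_gt with h | h <;> nlinarith
    rw [hy]; nlinarith
  · set X := |x| with hX
    set Y := |y| with hY
    set B := |b| with hB
    have hya : 1 ≤ Y := Int.one_le_abs hy
    rcases eq_or_ne x 0 with hx | hx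
    · have hy1 : 1 ≤ y ^ 2 := by rcases hy.lt_or_gt with h | h <;> nlinarith
      rw [hx]; nlinarith
    · have hxa : 1 ≤ X := Int.one_le_abs hx
      have key : -(B * X * Y) ≤ b * x * y := by
        have h1 : B * X * Y = |b * x * y| := by rw [hB, hX, hY, abs_mul, abs_mul]
        rw [h1]; exact neg_abs_le _
      have hx2 : x ^ 2 = X ^ 2 := (sq_abs x).symm
      have hy2 : y ^ 2 = Y ^ 2 := (sq_abs y).symm
      have hbb : 0 ≤ B := abs_nonneg b
      have hcb : 0 ≤ c - B := by linarith
      rw [hx2, hy2]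
      nlinarith [mul_nonneg (sub_nonneg.mpr hb) (by nlinarith : (0:ℤ) ≤ X ^ 2 - 1),
        mul_nonneg hcb (by nlinarith : (0:ℤ) ≤ Y ^ 2 - 1),
        mul_nonneg hbb (sq_nonneg (X - Y)),
        mul_nonneg hbb (by nlinarith : (0:ℤ) ≤ X * Y - 1)]

lemma min_val2 {a b c x y : ℤ} (hb : |b| ≤ a) (hac : a ≤ c)
    (hx : x ≠ 0) (hy : y ≠ 0) :
    a + (c - |b|) ≤ a * x ^ 2 + b * x * y + c * y ^ 2 := by
  set X := |x| with hX
  set Y := |y| with hY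
  set B := |b| with hB
  have hya : 1 ≤ Y := Int.one_le_abs hy
  have hxa : 1 ≤ X := Int.one_le_abs hx
  have hb2 : B ≤ a := hb
  have key : -(B * X * Y) ≤ b * x * y := by
    have h1 : B * X * Y = |b * x * y| := by rw [hB, hX, hY, abs_mul, abs_mul]
    rw [h1]; exact neg_abs_le _
  have hx2 : x ^ 2 = X ^ 2 := (sq_abs x).symm
  have hy2 : y ^ 2 = Y ^ 2 := (sq_abs y).symm
  have hbb : 0 ≤ B := abs_nonneg b
  have hcb : 0 ≤ c - B := by linarith
  rw [hx2, hy2]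
  nlinarith [mul_nonneg (sub_nonneg.mpr hb2) (by nlinarith : (0:ℤ) ≤ X ^ 2 - 1),
    mul_nonneg hcb (by nlinarith : (0:ℤ) ≤ Y ^ 2 - 1),
    mul_nonneg hbb (sq_nonneg (X - Y)),
    mul_nonneg hbb (by nlinarith : (0:ℤ) ≤ X * Y - 1)]

lemma dvd_all_eq_one {a b c x : ℤ} (hprim : Int.gcd (Int.gcd a b) c = 1) (hx : 0 < x)
    (h1 : x ∣ a) (h2 : x ∣ b) (h3 : x ∣ c) : x = 1 := by
  have h : x ∣ ((Int.gcd (Int.gcd a b) c : ℤ)) := Int.dvd_coe_gcd (Int.dvd_coe_gcd h1 h2) h3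
  rw [hprim] at h
  exact Int.eq_one_of_dvd_one hx.le h

lemma neg_lt_of_reduced {a b c : ℤ} (ha : 0 < a) (h1 : |b| ≤ a)
    (hs : (|b| = a ∨ a = c) → 0 ≤ b) : -a < b := by
  rcases eq_or_lt_of_le (neg_le_of_abs_le h1) with h | h
  · have habs : |b| = a := by rw [← h, abs_neg, abs_of_pos ha]
    have := hs (Or.inl habs)
    linarith
  · exact h

/-! ### Uniqueness of reduced forms, integer core -/

lemma core {D a b c a' b' c' α β γ d : ℤ}
    (hD : D < -4)
    (hdet : α * d - β * γ = 1)
    (hprim : Int.gcd (Int.gcd a b) c = 1)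
    (ha : 0 < a) (hdisc : b ^ 2 - 4 * a * c = D)
    (ha2 : 0 < a') (hdisc2 : b' ^ 2 - 4 * a' * c' = D)
    (hab : |b| ≤ a) (hac : a ≤ c) (hsF : (|b| = a ∨ a = c) → 0 ≤ b)
    (hab2 : |b'| ≤ a') (hac2 : a' ≤ c') (hsG : (|b'| = a' ∨ a' = c') → 0 ≤ b')
    (ha' : a * α ^ 2 + b * α * γ + c * γ ^ 2 = a')
    (hb' : 2 * a * α * β + b * (α * d + β * γ) + 2 * c * γ * d = b')
    (hc' : a * β ^ 2 + b * β * d + c * d ^ 2 = c') :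
    a = a' ∧ b = b' ∧ c = c' ∧
      ((α = 1 ∧ β = 0 ∧ γ = 0 ∧ d = 1) ∨ (α = -1 ∧ β = 0 ∧ γ = 0 ∧ d = -1)) := by
  have hc : 0 < c := by nlinarith [sq_nonneg b]
  have hbneg : -a < b := neg_lt_of_reduced ha hab hsF
  have hble : b ≤ a := le_of_abs_le hab
  have hbneg2 : -a' < b' := neg_lt_of_reduced ha2 hab2 hsG
  have hble2 : b' ≤ a' := le_of_abs_le hab2
  have haa : a ≤ a' := by
    have hne : ¬(α = 0 ∧ γ = 0) := by
      rintro ⟨h1, h2⟩; rw [h1, h2] at hdet; simp at hdet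
    have := min_val ha hab hac hne
    linarith
  have ha'a : a' ≤ a := by
    have hne : ¬(d = 0 ∧ -γ = 0) := by
      rintro ⟨h1, h2⟩
      have hγ0 : γ = 0 := by omega
      rw [h1, hγ0] at hdet; simp at hdet
    have h2 := min_val ha2 hab2 hac2 hne
    have hback : a' * d ^ 2 + b' * (d * -γ) + c' * (-γ) ^ 2 = a := by
      linear_combination (-(d ^ 2)) * ha' + (d * γ) * hb' + (-(γ ^ 2)) * hc'
        + a * (α * d - β * γ + 1) * hdet
    linarith
  have haa' : a = a' := le_antisymm haa ha'a
  rcases eq_or_ne γ 0 with hγ | hγ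
  · -- γ = 0 case
    subst hγ
    have hαd : α * d = 1 := by linear_combination hdet
    rcases Int.mul_eq_one_iff_eq_one_or_neg_one.mp hαd with ⟨h1, h2⟩ | ⟨h1, h2⟩ <;>
      subst h1 <;> subst h2
    · -- α = 1, d = 1
      have hb'' : b' = b + 2 * a * β := by linear_combination -hb'
      rcases lt_trichotomy β 0 with hβ | hβ | hβ
      · exfalso
        have hp : a * (β + 1) ≤ 0 :=
          mul_nonpos_of_nonneg_of_nonpos ha.le (by linarith)
        linarith
      · subst hβ
        have hcc : c = c' := by linear_combination hc'
        exact ⟨haa', by linarith, hcc, Or.inl ⟨rfl, rfl, rfl, rfl⟩⟩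
      · exfalso
        have hp : 0 ≤ a * (β - 1) := mul_nonneg ha.le (by linarith)
        linarith
    · -- α = -1, d = -1
      have hb'' : b' = b - 2 * a * β := by linear_combination -hb'
      rcases lt_trichotomy β 0 with hβ | hβ | hβ
      · exfalso
        have hp : a * (β + 1) ≤ 0 :=
          mul_nonpos_of_nonneg_of_nonpos ha.le (by linarith)
        linarith
      · subst hβ
        have hcc : c = c' := by linear_combination hc'
        exact ⟨haa', by linarith, hcc, Or.inr ⟨rfl, rfl, rfl, rfl⟩⟩
      · exfalso
        have hp : 0 ≤ a * (β - 1) := mul_nonneg ha.le (by linarith)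
        linarith
  · -- γ ≠ 0 case : contradiction
    exfalso
    rcases eq_or_ne α 0 with hα | hα
    · subst hα
      have hβγ : (-β) * γ = 1 := by linear_combination hdet
      rcases Int.mul_eq_one_iff_eq_one_or_neg_one.mp hβγ with ⟨h1, h2⟩ | ⟨h1, h2⟩
      · -- β = -1, γ = 1
        have hβ : β = -1 := by linarith
        subst hβ; subst h2
        have hca : c = a := by linear_combination ha' - haa'
        have hb0 : 0 ≤ b := hsF (Or.inr hca.symm)
        have hb'' : b' = -b + 2 * a * d := by linear_combination -hb' + 2 * d * hca
        rcases lt_trichotomy d 0 with hd | hd | hd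
        · have hp : a * (d + 1) ≤ 0 :=
            mul_nonpos_of_nonneg_of_nonpos ha.le (by linarith)
          linarith
        · subst hd
          have hc'' : c' = a := by linear_combination -hc'
          have hbb : 0 ≤ b' := hsG (Or.inr (by linarith))
          have hb00 : b = 0 := by linarith
          have ha1 : a = 1 := dvd_all_eq_one hprim ha dvd_rfl (by rw [hb00]; exact dvd_zero a)
            (by rw [hca])
          rw [ha1] at hca hdisc
          rw [hb00] at hdisc
          rw [hca] at hdisc
          norm_num at hdisc
          omega
        · have h1 : 2 * a * d ≤ 2 * a := by linarith
          have h2 : 0 ≤ a * (d - 1) := mul_nonneg ha.le (by linarith)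
          have h3 : a * (d - 1) = 0 := by linarith
          have hd1 : d = 1 := by
            rcases mul_eq_zero.mp h3 with h | h
            · exact absurd h (by linarith)
            · linarith
          subst hd1
          have hba : b = a := by linarith
          have ha1 : a = 1 := dvd_all_eq_one hprim ha dvd_rfl (by rw [hba]) (by rw [hca])
          rw [ha1] at hba hca
          rw [hba, hca, ha1] at hdisc
          norm_num at hdisc
          omega
      · -- β = 1, γ = -1
        have hβ : β = 1 := by linarith
        subst hβ; subst h2
        have hca : c = a := by linear_combination ha' - haa'
        have hb0 : 0 ≤ b := hsF (Or.inr hca.symm)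
        have hb'' : b' = -b - 2 * a * d := by linear_combination -hb' - 2 * d * hca
        rcases lt_trichotomy d 0 with hd | hd | hd
        · have h1 : -(2 * a * d) ≤ 2 * a := by linarith
          have h2 : 0 ≤ a * (-d - 1) := mul_nonneg ha.le (by linarith)
          have h3 : a * (-d - 1) = 0 := by linarith
          have hd1 : d = -1 := by
            rcases mul_eq_zero.mp h3 with h | h
            · exact absurd h (by linarith)
            · linarith
          subst hd1
          have hba : b = a := by linarith
          have ha1 : a = 1 := dvd_all_eq_one hprim ha dvd_rfl (by rw [hba]) (by rw [hca])
          rw [ha1] at hba hca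
          rw [hba, hca, ha1] at hdisc
          norm_num at hdisc
          omega
        · subst hd
          have hc'' : c' = a := by linear_combination -hc'
          have hbb : 0 ≤ b' := hsG (Or.inr (by linarith))
          have hb00 : b = 0 := by linarith
          have ha1 : a = 1 := dvd_all_eq_one hprim ha dvd_rfl (by rw [hb00]; exact dvd_zero a)
            (by rw [hca])
          rw [ha1] at hca hdisc
          rw [hb00] at hdisc
          rw [hca] at hdisc
          norm_num at hdisc
          omega
        · have hp : 0 ≤ a * (d - 1) := mul_nonneg ha.le (by linarith)
          linarith
    · -- α ≠ 0, γ ≠ 0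
      have h2 := min_val2 hab hac hα hγ
      have h3 : c ≤ |b| := by linarith
      have h4 : |b| = a := le_antisymm hab (by linarith)
      have h5 : a = c := le_antisymm hac (by linarith)
      have hb0 : 0 ≤ b := hsF (Or.inl h4)
      have hba : b = a := by rw [abs_of_nonneg hb0] at h4; exact h4
      have ha1 : a = 1 := dvd_all_eq_one hprim ha dvd_rfl (by rw [hba]) (by rw [← h5])
      rw [hba, ← h5, ha1] at hdisc
      norm_num at hdisc
      omega

lemma sl_eq_one_of {δ : Matrix.SpecialLinearGroup (Fin 2) ℤ}
    (h00 : δ 0 0 = 1) (h01 : δ 0 1 = 0) (h10 : δ 1 0 = 0) (h11 : δ 1 1 = 1) : δ = 1 := by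
  apply Subtype.ext
  ext i j
  fin_cases i <;> fin_cases j <;>
    simp_all [Matrix.SpecialLinearGroup.coe_one, Matrix.one_apply]

lemma sl_eq_neg_one_of {δ : Matrix.SpecialLinearGroup (Fin 2) ℤ}
    (h00 : δ 0 0 = -1) (h01 : δ 0 1 = 0) (h10 : δ 1 0 = 0) (h11 : δ 1 1 = -1) : δ = -1 := by
  apply Subtype.ext
  rw [Matrix.SpecialLinearGroup.coe_neg]
  ext i j
  fin_cases i <;> fin_cases j <;>
    simp_all [Matrix.SpecialLinearGroup.coe_one, Matrix.one_apply]

/-- Uniqueness of reduced forms plus triviality of automorphisms, for `D < -4`. -/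
lemma reduced_unique {D : ℤ} (hD : D < -4) {F G : ℤ × ℤ × ℤ}
    (hF : IsForm D F) (hG : IsForm D G)
    (hFr : IsReducedForm F) (hGr : IsReducedForm G)
    {δ : Matrix.SpecialLinearGroup (Fin 2) ℤ} (h : formAct δ F = G) :
    F = G ∧ (δ = 1 ∨ δ = -1) := by
  obtain ⟨a, b, c⟩ := F
  obtain ⟨a', b', c'⟩ := G
  have hdet := sl_det δ
  have ha' : a * (δ 0 0) ^ 2 + b * (δ 0 0) * (δ 1 0) + c * (δ 1 0) ^ 2 = a' :=
    congrArg Prod.fst h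
  have hb' : 2 * a * (δ 0 0) * (δ 0 1) + b * ((δ 0 0) * (δ 1 1) + (δ 0 1) * (δ 1 0))
      + 2 * c * (δ 1 0) * (δ 1 1) = b' := congrArg (fun p : ℤ × ℤ × ℤ => p.2.1) h
  have hc' : a * (δ 0 1) ^ 2 + b * (δ 0 1) * (δ 1 1) + c * (δ 1 1) ^ 2 = c' :=
    congrArg (fun p : ℤ × ℤ × ℤ => p.2.2) h
  obtain ⟨h1, h2, h3, h4⟩ := core hD hdet hF.1 hF.2.1 hF.2.2 hG.2.1 hG.2.2
    hFr.1 hFr.2.1 hFr.2.2 hGr.1 hGr.2.1 hGr.2.2 ha' hb' hc'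
  refine ⟨Prod.ext h1 (Prod.ext h2 h3), ?_⟩
  rcases h4 with ⟨e1, e2, e3, e4⟩ | ⟨e1, e2, e3, e4⟩
  · exact Or.inl (sl_eq_one_of e1 e2 e3 e4)
  · exact Or.inr (sl_eq_neg_one_of e1 e2 e3 e4)

/-! ### Existence of reduced forms -/

def Tm (m : ℤ) : Matrix.SpecialLinearGroup (Fin 2) ℤ :=
  ⟨!![1, m; 0, 1], by simp [Matrix.det_fin_two_of]⟩

def Sm : Matrix.SpecialLinearGroup (Fin 2) ℤ :=
  ⟨!![0, -1; 1, 0], by simp [Matrix.det_fin_two_of]⟩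

lemma formAct_Tm (m a b c : ℤ) :
    formAct (Tm m) (a, b, c) = (a, b + 2 * a * m, a * m ^ 2 + b * m + c) := by
  simp only [formAct, Tm]
  norm_num [Matrix.SpecialLinearGroup.coe_mk]
  ring_nf

lemma formAct_Sm (a b c : ℤ) : formAct Sm (a, b, c) = (c, -b, a) := by
  simp only [formAct, Sm]
  norm_num [Matrix.SpecialLinearGroup.coe_mk]

lemma isReduced_mk {a b c : ℤ} (h1 : |b| ≤ a) (h2 : a ≤ c)
    (h3 : (|b| = a ∨ a = c) → 0 ≤ b) : IsReducedForm (a, b, c) := ⟨h1, h2, h3⟩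

lemma exists_reduced_aux {D : ℤ} (hD : D < 0) :
    ∀ n : ℕ, ∀ F : ℤ × ℤ × ℤ, IsForm D F → F.1.toNat ≤ n →
      ∃ δ, IsReducedForm (formAct δ F) := by
  intro n
  induction n with
  | zero =>
    intro F hF h0
    exact absurd hF.2.1 (by omega)
  | succ n ih =>
    intro F hF hle
    obtain ⟨a, b, c⟩ := F
    have hpos : 0 < a := hF.2.1
    have hdisc : b ^ 2 - 4 * a * c = D := hF.2.2
    have hc : 0 < c := by nlinarith [sq_nonneg b]
    set m : ℤ := (a - b) / (2 * a) with hm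
    set r : ℤ := (a - b) % (2 * a) with hr
    have hdm : 2 * a * m + r = a - b := Int.mul_ediv_add_emod _ _
    have hr0 : 0 ≤ r := Int.emod_nonneg _ (by positivity)
    have hr1 : r < 2 * a := Int.emod_lt_of_pos _ (by positivity)
    set b₁ : ℤ := b + 2 * a * m with hb₁
    have hb₁r : b₁ = a - r := by omega
    have hb₁a : -a < b₁ ∧ b₁ ≤ a := by omega
    set c₁ : ℤ := a * m ^ 2 + b * m + c with hc₁
    have hF₁ : formAct (Tm m) (a, b, c) = (a, b₁, c₁) := formAct_Tm m a b c
    have hF₁form : IsForm D (a, b₁, c₁) := hF₁ ▸ isForm_formAct hD (Tm m) hF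
    have hdisc1 : b₁ ^ 2 - 4 * a * c₁ = D := hF₁form.2.2
    have hc₁pos : 0 < c₁ := by nlinarith [sq_nonneg b₁]
    rcases le_or_gt a c₁ with hac | hac
    · rcases le_or_gt 0 b₁ with hb0 | hb0
      · refine ⟨Tm m, ?_⟩
        rw [hF₁]
        exact isReduced_mk (by rw [abs_of_nonneg hb0]; exact hb₁a.2) hac (fun _ => hb0)
      · rcases eq_or_lt_of_le hac with heq | hlt
        · refine ⟨Tm m * Sm, ?_⟩
          rw [← formAct_mul, hF₁, formAct_Sm]
          refine isReduced_mk ?_ (by omega) (fun _ => by omega)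
          rw [abs_of_pos (by omega : 0 < -b₁)]
          omega
        · refine ⟨Tm m, ?_⟩
          rw [hF₁]
          refine isReduced_mk (by rw [abs_of_neg hb0]; omega) (le_of_lt hlt) ?_
          rintro (habs | habs)
          · rw [abs_of_neg hb0] at habs; omega
          · omega
    · have hF₂form : IsForm D (c₁, -b₁, a) := by
        have := isForm_formAct hD Sm hF₁form
        rwa [formAct_Sm] at this
      obtain ⟨δ, hδ⟩ := ih (c₁, -b₁, a) hF₂form (by omega)
      refine ⟨Tm m * Sm * δ, ?_⟩
      rw [← formAct_mul, ← formAct_mul, hF₁, formAct_Sm]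
      exact hδ

lemma exists_reduced {D : ℤ} (hD : D < 0) (F : ℤ × ℤ × ℤ) (hF : IsForm D F) :
    ∃ δ, IsReducedForm (formAct δ F) ∧ IsForm D (formAct δ F) :=
  let ⟨δ, hδ⟩ := exists_reduced_aux hD F.1.toNat F hF le_rfl
  ⟨δ, hδ, isForm_formAct hD δ hF⟩

/-! ### gcd and congruence subgroup lemmas -/

lemma gcd_eq_of_dvd_sub {a b : ℤ} {n : ℕ} (h : (n : ℤ) ∣ b - a) : Int.gcd a n = Int.gcd b n := by
  have key : ∀ u v : ℤ, (n : ℤ) ∣ v - u → Int.gcd u n ∣ Int.gcd v n := by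
    intro u v huv
    have h1 : (Int.gcd u n : ℤ) ∣ v := by
      have hv : v = u + (v - u) := by ring
      rw [hv]
      exact dvd_add (Int.gcd_dvd_left _ _) ((Int.gcd_dvd_right _ _).trans huv)
    have h2 : (Int.gcd u n : ℤ) ∣ (n : ℤ) := Int.gcd_dvd_right _ _
    exact Int.natCast_dvd_natCast.mp (Int.dvd_coe_gcd h1 h2)
  exact Nat.dvd_antisymm (key a b h) (key b a (by simpa using dvd_neg.mpr h))

lemma gamma1_gcd {N : ℕ} {g : Matrix.SpecialLinearGroup (Fin 2) ℤ} (hg : g ∈ Gamma1 N)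
    (F : ℤ × ℤ × ℤ) : Int.gcd (formAct g F).1 N = Int.gcd F.1 N := by
  obtain ⟨h1, h2, h3⟩ := (Gamma1_mem N g).mp hg
  refine (gcd_eq_of_dvd_sub ?_)
  have hz : (((F.1 - (formAct g F).1 : ℤ)) : ZMod N) = 0 := by
    simp only [formAct]
    push_cast
    rw [h1, h3]
    ring
  exact (ZMod.intCast_zmod_eq_zero_iff_dvd _ _).mp hz

lemma mem_join {N : ℕ} {g : Matrix.SpecialLinearGroup (Fin 2) ℤ}
    (hg : g ∈ Gamma1 N ⊔ Subgroup.zpowers (-1)) : g ∈ Gamma1 N ∨ -g ∈ Gamma1 N := by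
  let S : Subgroup (Matrix.SpecialLinearGroup (Fin 2) ℤ) :=
    { carrier := {g | g ∈ Gamma1 N ∨ -g ∈ Gamma1 N}
      one_mem' := Or.inl (one_mem _)
      mul_mem' := by
        rintro a b (ha | ha) (hb | hb)
        · exact Or.inl (mul_mem ha hb)
        · exact Or.inr (by rw [← mul_neg]; exact mul_mem ha hb)
        · exact Or.inr (by rw [← neg_mul]; exact mul_mem ha hb)
        · exact Or.inl (by rw [← neg_mul_neg a b]; exact mul_mem ha hb)
      inv_mem' := by
        rintro a (ha | ha)
        · exact Or.inl (inv_mem ha)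
        · exact Or.inr (by rw [← inv_neg]; exact inv_mem ha) }
  have hle : Gamma1 N ⊔ Subgroup.zpowers (-1) ≤ S := by
    refine sup_le (fun x hx => Or.inl hx) (Subgroup.zpowers_le.mpr ?_)
    exact Or.inr (by rw [neg_neg]; exact one_mem _)
  exact hle hg

/-! ### Main theorem -/

/-- Let `D < -4` with `D ≡ 0, 1 (mod 4)`, let `Q₁, …, Q_h` be the reduced forms of
discriminant `D`, and `γ₁, …, γ_m` a complete set of representatives of the left
cosets of `±Γ₁(N)` in `SL₂(ℤ)`. Then the forms `Qᵢ^{γₖ}` whose leading coefficient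
is prime to `N` represent all classes of `𝒬(D,N)/Γ₁(N)`, without repetition. -/
theorem extended_form_class_group_representatives
    (D : ℤ) (hD4 : D < -4) (hDcong : D % 4 = 0 ∨ D % 4 = 1)
    (N : ℕ) (hN : 0 < N) (h m : ℕ)
    (Q : Fin h → ℤ × ℤ × ℤ)
    (hQ : ∀ F : ℤ × ℤ × ℤ, (IsForm D F ∧ IsReducedForm F) ↔ ∃ i, F = Q i)
    (hQinj : Function.Injective Q)
    (γ : Fin m → Matrix.SpecialLinearGroup (Fin 2) ℤ)
    (hγ : ∀ δ : Matrix.SpecialLinearGroup (Fin 2) ℤ,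
        ∃! k : Fin m, ∃ g ∈ Gamma1 N ⊔ Subgroup.zpowers (-1), δ = γ k * g) :
    (∀ (i i' : Fin h) (k k' : Fin m),
        Int.gcd (formAct (γ k) (Q i)).1 N = 1 →
        Int.gcd (formAct (γ k') (Q i')).1 N = 1 →
        (∃ g ∈ Gamma1 N, formAct g (formAct (γ k) (Q i)) = formAct (γ k') (Q i')) →
        i = i' ∧ k = k') ∧
    (∀ F : ℤ × ℤ × ℤ, IsForm D F → Int.gcd F.1 N = 1 →
        ∃ (i : Fin h) (k : Fin m),
          Int.gcd (formAct (γ k) (Q i)).1 N = 1 ∧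
          ∃ g ∈ Gamma1 N, formAct g (formAct (γ k) (Q i)) = F) := by
  have hD0 : D < 0 := by omega
  have hQprop : ∀ i, IsForm D (Q i) ∧ IsReducedForm (Q i) := fun i => (hQ (Q i)).mpr ⟨i, rfl⟩
  constructor
  · -- injectivity
    rintro i i' k k' hg1 hg2 ⟨g, hgΓ, heq⟩
    have heq2 : formAct (γ k * g) (Q i) = formAct (γ k') (Q i') := by
      rw [← formAct_mul]; exact heq
    have key : formAct (γ k * g * (γ k')⁻¹) (Q i) = Q i' := by
      rw [← formAct_mul, heq2, formAct_mul, mul_inv_cancel, formAct_one]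
    obtain ⟨hFG, hpm⟩ := reduced_unique hD4 (hQprop i).1 (hQprop i').1
      (hQprop i).2 (hQprop i').2 key
    have hii' : i = i' := hQinj hFG
    refine ⟨hii', ?_⟩
    have hkey : ∃ g' ∈ Gamma1 N ⊔ Subgroup.zpowers (-1), γ k = γ k' * g' := by
      rcases hpm with hone | hneg
      · refine ⟨g⁻¹, Subgroup.mem_sup_left (inv_mem hgΓ), ?_⟩
        have : γ k * g = γ k' := by
          have := mul_inv_eq_iff_eq_mul.mp hone
          rw [one_mul] at this
          exact this
        rw [← this, mul_assoc, mul_inv_cancel, mul_one]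
      · refine ⟨(-1) * g⁻¹, mul_mem (Subgroup.mem_sup_right (Subgroup.mem_zpowers _))
          (Subgroup.mem_sup_left (inv_mem hgΓ)), ?_⟩
        have h1 : γ k * g = -1 * γ k' := mul_inv_eq_iff_eq_mul.mp hneg
        have h2 : γ k * g = γ k' * (-1) := by
          rw [h1, neg_one_mul, mul_neg_one]
        calc γ k = γ k * g * g⁻¹ := by rw [mul_assoc, mul_inv_cancel, mul_one]
        _ = γ k' * (-1) * g⁻¹ := by rw [h2]
        _ = γ k' * ((-1) * g⁻¹) := by rw [mul_assoc]
    obtain ⟨g', hg', hkeq⟩ := hkey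
    exact (hγ (γ k)).unique ⟨1, one_mem _, (mul_one _).symm⟩ ⟨g', hg', hkeq⟩
  · -- surjectivity
    intro F hF hgcd
    obtain ⟨δ, hred, hform⟩ := exists_reduced hD0 F hF
    obtain ⟨i, hi⟩ := (hQ (formAct δ F)).mp ⟨hform, hred⟩
    have hFQ : formAct δ⁻¹ (Q i) = F := by
      rw [← hi, formAct_mul, mul_inv_cancel, formAct_one]
    obtain ⟨k, ⟨g, hgj, hkg⟩, _⟩ := hγ δ⁻¹
    rcases mem_join hgj with hgΓ | hgΓ
    · refine ⟨i, k, ?_, g, hgΓ, ?_⟩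
      · have hfeq : formAct g (formAct (γ k) (Q i)) = F := by
          rw [formAct_mul, ← hkg, hFQ]
        rw [← hgcd, ← hfeq]
        exact (gamma1_gcd hgΓ (formAct (γ k) (Q i))).symm
      · rw [formAct_mul, ← hkg, hFQ]
    · refine ⟨i, k, ?_, -g, hgΓ, ?_⟩
      · have hfeq : formAct (-g) (formAct (γ k) (Q i)) = F := by
          rw [formAct_neg, formAct_mul, ← hkg, hFQ]
        rw [← hgcd, ← hfeq]
        exact (gamma1_gcd hgΓ (formAct (γ k) (Q i))).symm
      · rw [formAct_neg, formAct_mul, ← hkg, hFQ]
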